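/- Fix d ≥ 1, vectors v_1, …, v_{d+1} ∈ ℝ^d satisfying the simplex conditions, κ_k⁺, κ_k⁻ ≥ 0 (k = 1, …, d), and an invertible d×d real matrix σ. Assume that for every β ∈ B the matrix σᵀ + β is invertible and v_i β (σᵀ+β)^{-1} v_jᵀ > −1 for all i, j ∈ {1, …, d+1}. Then there exists ε > 0 such that for every β ∈ B, every i ∈ {1, …, d+1}, and every w ∈ ℝ^d with |w| < ε, the vector v_i β (σᵀ+β)^{-1} + w lies in the interior of the convex hull of {v_1, …, v_{d+1}}. -/

import Mathlib

open scoped BigOperators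
open Matrix

/-- The set `B` of matrices whose `k`-th column is `∑ⱼ w_{jk} vⱼᵀ` with
`w_{jk} ∈ [0, (κₖ⁺+κₖ⁻)/(d+1)]`. -/
def simplexB (d : ℕ) (v : Fin (d + 1) → Fin d → ℝ) (κp κm : Fin d → ℝ) :
    Set (Matrix (Fin d) (Fin d) ℝ) :=
  {β | ∃ w : Fin (d + 1) → Fin d → ℝ,
      (∀ j k, w j k ∈ Set.Icc (0 : ℝ) ((κp k + κm k) / (d + 1))) ∧
      ∀ a k, β a k = ∑ j, w j k * v j a}


lemma gramdiag (d : ℕ) (v : Fin (d + 1) → Fin d → ℝ)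
    (hnorm : ∀ i, ∑ k, v i k ^ 2 = (d : ℝ))
    (hinner : ∀ i j, i ≠ j → ∑ k, v i k * v j k = -1) :
    ∀ i j : Fin (d+1), ∑ k, v i k * v j k = ((d:ℝ)+1) * (if i = j then 1 else 0) - 1 := by
  intro i j
  by_cases h : i = j
  · subst h
    have : ∑ k, v i k * v i k = (d:ℝ) := by simpa [sq] using hnorm i
    rw [this, if_pos rfl]; ring
  · rw [hinner i j h, if_neg h]; ring

lemma sumzero (d : ℕ) (v : Fin (d + 1) → Fin d → ℝ)
    (hnorm : ∀ i, ∑ k, v i k ^ 2 = (d : ℝ))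
    (hinner : ∀ i j, i ≠ j → ∑ k, v i k * v j k = -1) :
    ∀ k, ∑ j, v j k = 0 := by
  have hg := gramdiag d v hnorm hinner
  have key : ∑ k, (∑ j, v j k) ^ 2 = 0 := by
    have e1 : ∀ k : Fin d, (∑ j, v j k)^2 = ∑ i, ∑ j, v i k * v j k := by
      intro k; rw [sq, Finset.sum_mul_sum]
    calc ∑ k, (∑ j, v j k) ^ 2 = ∑ k : Fin d, ∑ i, ∑ j, v i k * v j k := by
            exact Finset.sum_congr rfl fun k _ => e1 k
      _ = ∑ i, ∑ k : Fin d, ∑ j, v i k * v j k := Finset.sum_comm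
      _ = ∑ i, ∑ j, ∑ k : Fin d, v i k * v j k :=
            Finset.sum_congr rfl fun i _ => Finset.sum_comm
      _ = ∑ i : Fin (d+1), ∑ j, (((d:ℝ)+1) * (if i = j then 1 else 0) - 1) := by
            exact Finset.sum_congr rfl fun i _ => Finset.sum_congr rfl fun j _ => hg i j
      _ = 0 := by
            refine Finset.sum_eq_zero fun i _ => ?_
            rw [Finset.sum_sub_distrib, ← Finset.mul_sum, Finset.sum_ite_eq]
            simp [Finset.card_univ]
  intro k
  have h0 : ∀ k ∈ Finset.univ, (0:ℝ) ≤ (∑ j, v j k) ^ 2 := fun k _ => sq_nonneg _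
  have := (Finset.sum_eq_zero_iff_of_nonneg h0).mp key k (Finset.mem_univ k)
  exact pow_eq_zero_iff (two_ne_zero) |>.mp this

lemma gramid (d : ℕ) (v : Fin (d + 1) → Fin d → ℝ)
    (hnorm : ∀ i, ∑ k, v i k ^ 2 = (d : ℝ))
    (hinner : ∀ i j, i ≠ j → ∑ k, v i k * v j k = -1) :
    ∀ k l : Fin d, ∑ j, v j k * v j l = ((d:ℝ)+1) * (if k = l then 1 else 0) := by
  have hg := gramdiag d v hnorm hinner
  have hz := sumzero d v hnorm hinner
  set m : Fin d → Fin d → ℝ := fun k l => ∑ j, v j k * v j l with hm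
  set E : Fin d → Fin d → ℝ := fun k l => ((d:ℝ)+1) * (if k = l then 1 else 0) with hE
  set n : Fin d → Fin d → ℝ := fun k l => E k l - m k l with hn
  -- m symmetric
  have msymm : ∀ k l, m k l = m l k := by
    intro k l; simp only [hm]; exact Finset.sum_congr rfl fun j _ => mul_comm _ _
  have nsymm : ∀ k l, n k l = n l k := by
    intro k l; simp only [hn, hE, msymm k l]
    congr 2
    simp [eq_comm]
  -- key: ∑ m k c * m c l = (d+1) m k l
  have hmm : ∀ k l, ∑ c, m k c * m c l = ((d:ℝ)+1) * m k l := by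
    intro k l
    have step1 : ∀ c : Fin d, m k c * m c l = ∑ i, ∑ j, (v i k * v i c) * (v j c * v j l) := by
      intro c; rw [hm, Finset.sum_mul_sum]
    calc ∑ c, m k c * m c l
        = ∑ c : Fin d, ∑ i, ∑ j, (v i k * v i c) * (v j c * v j l) :=
          Finset.sum_congr rfl fun c _ => step1 c
      _ = ∑ i, ∑ c : Fin d, ∑ j, (v i k * v i c) * (v j c * v j l) := Finset.sum_comm
      _ = ∑ i, ∑ j, ∑ c : Fin d, (v i k * v i c) * (v j c * v j l) :=
          Finset.sum_congr rfl fun i _ => Finset.sum_comm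
      _ = ∑ i, ∑ j, (v i k * v j l) * ∑ c, v i c * v j c := by
          refine Finset.sum_congr rfl fun i _ => Finset.sum_congr rfl fun j _ => ?_
          rw [Finset.mul_sum]
          exact Finset.sum_congr rfl fun c _ => by ring
      _ = ∑ i, ∑ j, (v i k * v j l) * (((d:ℝ)+1) * (if i = j then 1 else 0) - 1) := by
          refine Finset.sum_congr rfl fun i _ => Finset.sum_congr rfl fun j _ => ?_
          rw [hg i j]
      _ = ∑ i, ∑ j, (((d:ℝ)+1) * (if i = j then v i k * v j l else 0) - v i k * v j l) := by
          refine Finset.sum_congr rfl fun i _ => Finset.sum_congr rfl fun j _ => ?_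
          by_cases h : i = j <;> simp [h] <;> ring
      _ = ((d:ℝ)+1) * m k l := by
          rw [hm]
          simp only [Finset.sum_sub_distrib, Finset.sum_ite_eq, Finset.mem_univ, if_true,
            ← Finset.mul_sum, ← Finset.sum_mul]
          rw [hz k]
          ring
  -- ∑ E k c * x c = (d+1) x k  etc.
  have hE1 : ∀ (x : Fin d → ℝ) k, ∑ c, E k c * x c = ((d:ℝ)+1) * x k := by
    intro x k
    simp only [hE, mul_assoc, ← Finset.mul_sum]
    congr 1
    simp [Finset.sum_ite_eq]
  have hE2 : ∀ (x : Fin d → ℝ) l, ∑ c, x c * E c l = ((d:ℝ)+1) * x l := by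
    intro x l
    have : ∀ c, x c * E c l = E l c * x c := by
      intro c; simp only [hE, eq_comm (a := c) (b := l)]; ring
    rw [Finset.sum_congr rfl fun c _ => this c, hE1]
  -- n * n = (d+1) n
  have hnn : ∀ k l, ∑ c, n k c * n c l = ((d:ℝ)+1) * n k l := by
    intro k l
    have expand : ∀ c, n k c * n c l =
        E k c * E c l - E k c * m c l - m k c * E c l + m k c * m c l := by
      intro c; simp only [hn]; ring
    rw [Finset.sum_congr rfl fun c _ => expand c]
    simp only [Finset.sum_add_distrib, Finset.sum_sub_distrib]
    rw [hE1 (fun c => E c l) k, hE1 (fun c => m c l) k, hE2 (fun c => m k c) l, hmm k l]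
    simp only [hn]
    ring
  -- trace n = 0
  have htrace : ∑ k, n k k = 0 := by
    have h1 : ∑ k : Fin d, E k k = (d:ℝ) * ((d:ℝ)+1) := by
      simp [hE, Finset.card_univ]
      ring
    have h2 : ∑ k : Fin d, m k k = (d:ℝ) * ((d:ℝ)+1) := by
      simp only [hm]
      rw [Finset.sum_comm]
      have : ∀ j : Fin (d+1), ∑ k : Fin d, v j k * v j k = (d:ℝ) := by
        intro j; simpa [sq] using hnorm j
      rw [Finset.sum_congr rfl fun j _ => this j]
      simp [Finset.card_univ]
      ring
    simp only [hn, Finset.sum_sub_distrib, h1, h2, sub_self]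
  -- conclude n = 0
  have hsq : ∑ k, ∑ c, (n k c)^2 = 0 := by
    have : ∀ k, ∑ c, (n k c)^2 = ((d:ℝ)+1) * n k k := by
      intro k
      rw [← hnn k k]
      refine Finset.sum_congr rfl fun c _ => ?_
      rw [sq, nsymm c k]
    rw [Finset.sum_congr rfl fun k _ => this k, ← Finset.mul_sum, htrace, mul_zero]
  have hzero : ∀ k c, n k c = 0 := by
    intro k c
    have h0 : ∀ k ∈ Finset.univ, (0:ℝ) ≤ ∑ c, (n k c)^2 :=
      fun k _ => Finset.sum_nonneg fun c _ => sq_nonneg _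
    have h1 := (Finset.sum_eq_zero_iff_of_nonneg h0).mp hsq k (Finset.mem_univ k)
    have h2 := (Finset.sum_eq_zero_iff_of_nonneg (fun c _ => sq_nonneg (n k c))).mp h1 c
      (Finset.mem_univ c)
    exact pow_eq_zero_iff two_ne_zero |>.mp h2
  intro k l
  have := hzero k l
  simp only [hn, hE, hm, sub_eq_zero] at this
  exact this.symm
lemma vecC (d : ℕ) (v : Fin (d + 1) → Fin d → ℝ)
    (hnorm : ∀ i, ∑ k, v i k ^ 2 = (d : ℝ))
    (hinner : ∀ i j, i ≠ j → ∑ k, v i k * v j k = -1) :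
    ∀ (x : Fin d → ℝ) (l : Fin d), ∑ j, (x ⬝ᵥ v j) * v j l = ((d:ℝ)+1) * x l := by
  intro x l
  have hgram := gramid d v hnorm hinner
  calc ∑ j, (x ⬝ᵥ v j) * v j l = ∑ j, ∑ k, x k * v j k * v j l := by
        refine Finset.sum_congr rfl fun j _ => ?_
        rw [dotProduct, Finset.sum_mul]
    _ = ∑ k, ∑ j, x k * v j k * v j l := Finset.sum_comm
    _ = ∑ k, x k * (∑ j, v j k * v j l) := by
        refine Finset.sum_congr rfl fun k _ => ?_
        rw [Finset.mul_sum]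
        exact Finset.sum_congr rfl fun j _ => by ring
    _ = ∑ k, (if k = l then x k * ((d:ℝ)+1) else 0) := by
        refine Finset.sum_congr rfl fun k _ => ?_
        rw [hgram k l]
        by_cases h : k = l <;> simp [h] <;> ring
    _ = ((d:ℝ)+1) * x l := by
        rw [Finset.sum_ite_eq' Finset.univ l (fun k => x k * ((d:ℝ)+1))]
        simp [mul_comm]

lemma open_subset_hull (d : ℕ) (v : Fin (d + 1) → Fin d → ℝ)
    (hnorm : ∀ i, ∑ k, v i k ^ 2 = (d : ℝ))
    (hinner : ∀ i j, i ≠ j → ∑ k, v i k * v j k = -1) :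
    {x : Fin d → ℝ | ∀ j, -1 < x ⬝ᵥ v j} ⊆ interior (convexHull ℝ (Set.range v)) := by
  have hz := sumzero d v hnorm hinner
  have hC := vecC d v hnorm hinner
  have hdpos : (0:ℝ) < (d:ℝ) + 1 := by positivity
  refine interior_maximal ?_ ?_
  · intro x hx
    simp only [Set.mem_setOf_eq] at hx
    set μ : Fin (d+1) → ℝ := fun j => (1 + x ⬝ᵥ v j) / ((d:ℝ)+1) with hμ
    have hμ0 : ∀ j, 0 ≤ μ j := fun j => div_nonneg (by linarith [hx j]) hdpos.le
    have hsumdot : ∑ j, x ⬝ᵥ v j = 0 := by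
      have : ∀ j, x ⬝ᵥ v j = ∑ k, x k * v j k := fun j => rfl
      calc ∑ j, x ⬝ᵥ v j = ∑ j, ∑ k, x k * v j k := Finset.sum_congr rfl fun j _ => rfl
        _ = ∑ k, ∑ j : Fin (d+1), x k * v j k := Finset.sum_comm
        _ = ∑ k, x k * ∑ j, v j k := Finset.sum_congr rfl fun k _ => (Finset.mul_sum _ _ _).symm
        _ = 0 := by simp [hz]
    have hμsum : ∑ j, μ j = 1 := by
      simp only [hμ]
      rw [← Finset.sum_div, Finset.sum_add_distrib, hsumdot]
      simp only [add_zero, Finset.sum_const, Finset.card_univ, Fintype.card_fin, nsmul_eq_mul,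
        mul_one]
      push_cast
      field_simp
    have hcm : Finset.univ.centerMass μ v = x := by
      rw [Finset.centerMass_eq_of_sum_1 _ _ hμsum]
      funext l
      rw [Finset.sum_apply]
      have : ∀ j, (μ j • v j) l = μ j * v j l := fun j => rfl
      calc ∑ j, (μ j • v j) l = ∑ j, (1 + x ⬝ᵥ v j) * v j l / ((d:ℝ)+1) := by
            refine Finset.sum_congr rfl fun j _ => ?_
            simp only [Pi.smul_apply, smul_eq_mul, hμ]
            ring
        _ = (∑ j, (1 + x ⬝ᵥ v j) * v j l) / ((d:ℝ)+1) := by rw [Finset.sum_div]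
        _ = (∑ j, v j l + ∑ j, (x ⬝ᵥ v j) * v j l) / ((d:ℝ)+1) := by
            congr 1
            rw [← Finset.sum_add_distrib]
            exact Finset.sum_congr rfl fun j _ => by ring
        _ = x l := by
            rw [hz l, hC x l, zero_add]
            field_simp
    rw [← hcm]
    exact Finset.centerMass_mem_convexHull _ (fun j _ => hμ0 j) (by rw [hμsum]; norm_num)
      (fun j _ => Set.mem_range_self j)
  · have : {x : Fin d → ℝ | ∀ j, -1 < x ⬝ᵥ v j} = ⋂ j, {x : Fin d → ℝ | -1 < x ⬝ᵥ v j} := by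
      ext x; simp [Set.mem_iInter]
    rw [this]
    exact isOpen_iInter_of_finite fun j =>
      isOpen_lt continuous_const (continuous_id.dotProduct continuous_const)

set_option maxHeartbeats 1000000 in
/-- under Assumption 2.1, uniformly over `β ∈ B`, the row vectors
`vᵢ β (σᵀ+β)⁻¹` stay in the interior of the convex hull of the simplex vectors,
even after perturbation by any `w` with `|w| < ε`. -/
theorem uniform_interior_convexHull (d : ℕ) (hd : 1 ≤ d)
    (v : Fin (d + 1) → Fin d → ℝ)
    (hnorm : ∀ i, ∑ k, v i k ^ 2 = (d : ℝ))
    (hinner : ∀ i j, i ≠ j → ∑ k, v i k * v j k = -1)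
    (κp κm : Fin d → ℝ) (hκp : ∀ k, 0 ≤ κp k) (hκm : ∀ k, 0 ≤ κm k)
    (σ : Matrix (Fin d) (Fin d) ℝ) (hσ : IsUnit σ.det)
    (hass : ∀ β ∈ simplexB d v κp κm,
      IsUnit (σᵀ + β) ∧
      ∀ i j, Matrix.vecMul (Matrix.vecMul (v i) β) (σᵀ + β)⁻¹ ⬝ᵥ v j > -1) :
    ∃ ε > 0, ∀ β ∈ simplexB d v κp κm, ∀ i, ∀ w : Fin d → ℝ,
      Real.sqrt (∑ k, w k ^ 2) < ε →
      Matrix.vecMul (Matrix.vecMul (v i) β) (σᵀ + β)⁻¹ + w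
        ∈ interior (convexHull ℝ (Set.range v)) := by
  classical
  set B := simplexB d v κp κm with hB
  -- compactness of B
  have hBcompact : IsCompact B := by
    have himg : B = (fun w : Fin (d+1) → Fin d → ℝ =>
        (Matrix.of fun a k => ∑ j, w j k * v j a : Matrix (Fin d) (Fin d) ℝ)) ''
        (Set.univ.pi fun _ : Fin (d+1) =>
          Set.univ.pi fun k : Fin d => Set.Icc (0:ℝ) ((κp k + κm k)/(d+1))) := by
      ext β
      constructor
      · rintro ⟨w, hw, hβ⟩
        refine ⟨w, ?_, ?_⟩
        · intro j _; intro k _; exact hw j k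
        · funext a k; exact (hβ a k).symm
      · rintro ⟨w, hw, rfl⟩
        exact ⟨w, fun j k => hw j (Set.mem_univ j) k (Set.mem_univ k), fun a k => rfl⟩
    rw [himg]
    refine IsCompact.image ?_ ?_
    · exact isCompact_univ_pi fun j => isCompact_univ_pi fun k => isCompact_Icc
    · refine continuous_pi fun a => continuous_pi fun k => ?_
      show Continuous fun w : Fin (d+1) → Fin d → ℝ => ∑ j, w j k * v j a
      exact continuous_finset_sum _ fun j _ =>
          ((continuous_apply_apply j k).mul continuous_const)
  have hBne : B.Nonempty := by
    refine ⟨0, 0, fun j k => ?_, fun a k => by simp⟩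
    exact ⟨le_refl 0, div_nonneg (add_nonneg (hκp k) (hκm k)) (by positivity)⟩
  -- continuity of the key functions on B
  have hdetne : ∀ β ∈ B, ((σᵀ + β).det) ≠ 0 := fun β hβ =>
    isUnit_iff_ne_zero.mp ((Matrix.isUnit_iff_isUnit_det _).mp (hass β hβ).1)
  have hinvc : ∀ β ∈ B, ContinuousAt (fun γ : Matrix (Fin d) (Fin d) ℝ => (σᵀ + γ)⁻¹) β := by
    intro β hβ
    have h1 : ContinuousAt (fun γ : Matrix (Fin d) (Fin d) ℝ => σᵀ + γ) β :=
      (continuous_const.add continuous_id).continuousAt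
    have h2 : ContinuousAt Inv.inv (σᵀ + β) := by
      apply continuousAt_matrix_inv
      rw [Ring.inverse_eq_inv']
      exact continuousAt_inv₀ (hdetne β hβ)
    exact h2.comp h1
  have hfc : ∀ (p : Fin (d+1) × Fin (d+1)), ∀ β ∈ B,
      ContinuousAt (fun γ => Matrix.vecMul (Matrix.vecMul (v p.1) γ) (σᵀ + γ)⁻¹ ⬝ᵥ v p.2) β := by
    intro p β hβ
    have hF : Continuous (fun q : Matrix (Fin d) (Fin d) ℝ × Matrix (Fin d) (Fin d) ℝ =>
        Matrix.vecMul (Matrix.vecMul (v p.1) q.1) q.2 ⬝ᵥ v p.2) :=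
      ((Continuous.matrix_vecMul (Continuous.matrix_vecMul continuous_const continuous_fst)
        continuous_snd).dotProduct continuous_const)
    have hpair : ContinuousAt (fun γ : Matrix (Fin d) (Fin d) ℝ => (γ, (σᵀ + γ)⁻¹)) β :=
      continuousAt_id.prodMk (hinvc β hβ)
    have heq : (fun γ : Matrix (Fin d) (Fin d) ℝ =>
        Matrix.vecMul (Matrix.vecMul (v p.1) γ) (σᵀ + γ)⁻¹ ⬝ᵥ v p.2) =
        (fun q : Matrix (Fin d) (Fin d) ℝ × Matrix (Fin d) (Fin d) ℝ =>
          Matrix.vecMul (Matrix.vecMul (v p.1) q.1) q.2 ⬝ᵥ v p.2) ∘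
        (fun γ => (γ, (σᵀ + γ)⁻¹)) := rfl
    rw [heq]
    exact hF.continuousAt.comp hpair
  -- min of G over B
  have hne : (Finset.univ : Finset (Fin (d+1) × Fin (d+1))).Nonempty := Finset.univ_nonempty
  set G : Matrix (Fin d) (Fin d) ℝ → ℝ := fun β =>
    Finset.univ.inf' hne (fun p : Fin (d+1) × Fin (d+1) =>
      Matrix.vecMul (Matrix.vecMul (v p.1) β) (σᵀ + β)⁻¹ ⬝ᵥ v p.2) with hG
  have hGcont : ContinuousOn G B := fun β hβ =>
    (ContinuousAt.finset_inf'_apply hne fun p _ => hfc p β hβ).continuousWithinAt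
  obtain ⟨β₀, hβ₀B, hmin⟩ := hBcompact.exists_isMinOn hBne hGcont
  set δ := 1 + G β₀ with hδ
  have hδpos : 0 < δ := by
    obtain ⟨p, -, hp⟩ := Finset.exists_mem_eq_inf' hne (fun p : Fin (d+1) × Fin (d+1) =>
      Matrix.vecMul (Matrix.vecMul (v p.1) β₀) (σᵀ + β₀)⁻¹ ⬝ᵥ v p.2)
    have h := (hass β₀ hβ₀B).2 p.1 p.2
    have : G β₀ = Matrix.vecMul (Matrix.vecMul (v p.1) β₀) (σᵀ + β₀)⁻¹ ⬝ᵥ v p.2 := hp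
    rw [hδ, this]
    linarith
  have hd0 : (0:ℝ) < Real.sqrt d := Real.sqrt_pos.mpr
    (by exact_mod_cast Nat.lt_of_lt_of_le Nat.zero_lt_one hd)
  refine ⟨δ / Real.sqrt d, div_pos hδpos hd0, ?_⟩
  intro β hβ i w hw
  refine open_subset_hull d v hnorm hinner ?_
  intro j
  rw [add_dotProduct]
  have h1 : G β ≤ Matrix.vecMul (Matrix.vecMul (v i) β) (σᵀ + β)⁻¹ ⬝ᵥ v j :=
    Finset.inf'_le _ (Finset.mem_univ (i, j))
  have h2 : G β₀ ≤ G β := hmin hβ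
  have hcs : |w ⬝ᵥ v j| ≤ Real.sqrt (∑ k, w k ^ 2) * Real.sqrt (d:ℝ) := by
    have h3 : (∑ k, w k * v j k)^2 ≤ (∑ k, w k ^ 2) * (∑ k, v j k ^ 2) :=
      Finset.sum_mul_sq_le_sq_mul_sq _ _ _
    rw [hnorm j] at h3
    calc |w ⬝ᵥ v j| = Real.sqrt ((∑ k, w k * v j k)^2) := (Real.sqrt_sq_eq_abs _).symm
      _ ≤ Real.sqrt ((∑ k, w k ^ 2) * (d:ℝ)) := Real.sqrt_le_sqrt h3
      _ = Real.sqrt (∑ k, w k ^ 2) * Real.sqrt (d:ℝ) :=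
          Real.sqrt_mul (Finset.sum_nonneg fun k _ => sq_nonneg _) _
  have h4 : Real.sqrt (∑ k, w k ^ 2) * Real.sqrt (d:ℝ) < δ := by
    rw [← lt_div_iff₀ hd0]
    exact hw
  have h6 := (abs_lt.mp (lt_of_le_of_lt hcs h4)).1
  linarith
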